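/- arXiv:1407.1912 — 7 statements merged into one kernel-verified Lean document; each statement's English description precedes it below -/
import Mathlib

section
/- The function V(x) = −2·log( (1/√2)·log(1/‖x‖) ), defined for x ∈ ℝ² with 0 < ‖x‖ < 1, satisfies ΔV(x) − exp(V(x))/‖x‖² = 0 for all x with 0 < ‖x‖ < 1. -/
open Real

noncomputable abbrev E2 := EuclideanSpace ℝ (Fin 2)

noncomputable def phi (s : ℝ) : ℝ := -2 * Real.log ((1 / Real.sqrt 2) * (-(1/2) * Real.log s))
noncomputable def phi' (s : ℝ) : ℝ := -2 / (s * Real.log s)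
noncomputable def phi'' (s : ℝ) : ℝ := 2 * (Real.log s + 1) / (s * Real.log s) ^ 2

lemma hasDerivAt_phi {s : ℝ} (h0 : 0 < s) (h1 : s < 1) : HasDerivAt phi (phi' s) s := by
  have hs : s ≠ 0 := ne_of_gt h0
  have hlog : Real.log s < 0 := Real.log_neg h0 h1
  have h2 : (0:ℝ) < Real.sqrt 2 := Real.sqrt_pos.2 (by norm_num)
  have hne : (1 / Real.sqrt 2) * (-(1/2) * Real.log s) ≠ 0 :=
    ne_of_gt (mul_pos (by positivity) (by nlinarith))
  have hinner : HasDerivAt (fun s : ℝ => (1 / Real.sqrt 2) * (-(1/2) * Real.log s))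
      ((1 / Real.sqrt 2) * (-(1/2) * s⁻¹)) s :=
    ((Real.hasDerivAt_log hs).const_mul (-(1/2) : ℝ)).const_mul _
  have h := (hinner.log hne).const_mul (-2 : ℝ)
  refine h.congr_deriv ?_
  rw [mul_div_mul_left _ _ (by positivity : (1 / Real.sqrt 2) ≠ (0:ℝ)),
    mul_div_mul_left _ _ (by norm_num : (-(1/2) : ℝ) ≠ 0)]
  unfold phi'
  field_simp

lemma hasDerivAt_phi' {s : ℝ} (h0 : 0 < s) (h1 : s < 1) : HasDerivAt phi' (phi'' s) s := by
  have hs : s ≠ 0 := ne_of_gt h0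
  have hlog : Real.log s < 0 := Real.log_neg h0 h1
  have hne : s * Real.log s ≠ 0 := mul_ne_zero hs (ne_of_lt hlog)
  have hu : HasDerivAt (fun s : ℝ => s * Real.log s) (Real.log s + 1) s := by
    have := (hasDerivAt_id s).mul (Real.hasDerivAt_log hs)
    refine this.congr_deriv ?_
    simp [hs]
  have h := (hasDerivAt_const s (-2 : ℝ)).div hu hne
  refine h.congr_deriv ?_
  unfold phi''
  field_simp
  ring

lemma V_eq (V : EuclideanSpace ℝ (Fin 2) → ℝ)
    (hV : ∀ x, V x = -2 * Real.log ((1 / Real.sqrt 2) * Real.log (1 / ‖x‖))) :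
    V = fun y => phi (‖y‖ ^ 2) := by
  funext y
  rw [hV, phi]
  have h1 : Real.log (1 / ‖y‖) = -Real.log ‖y‖ := by rw [one_div, Real.log_inv]
  have h2 : Real.log (‖y‖ ^ 2) = 2 * Real.log ‖y‖ := by
    rw [Real.log_pow]; push_cast; ring
  rw [h1, h2]
  ring_nf

lemma hasFDerivAt_sq (y : E2) :
    HasFDerivAt (fun y : E2 => ‖y‖ ^ 2) (2 • (innerSL ℝ y)) y := by
  simpa using (hasFDerivAt_id y).norm_sq

lemma inner_single (y : E2) (i : Fin 2) :
    (innerSL ℝ y) (EuclideanSpace.single i 1) = y i := by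
  simp [EuclideanSpace.inner_single_right]

lemma fderiv_V (V : EuclideanSpace ℝ (Fin 2) → ℝ)
    (hV : ∀ x, V x = -2 * Real.log ((1 / Real.sqrt 2) * Real.log (1 / ‖x‖)))
    {y : E2} (h0 : 0 < ‖y‖) (h1 : ‖y‖ < 1) (i : Fin 2) :
    fderiv ℝ V y (EuclideanSpace.single i 1) = phi' (‖y‖ ^ 2) * (2 * y i) := by
  have hs0 : 0 < ‖y‖ ^ 2 := by positivity
  have hs1 : ‖y‖ ^ 2 < 1 := by nlinarith
  have h : HasFDerivAt V (phi' (‖y‖ ^ 2) • (2 • (innerSL ℝ y))) y := by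
    rw [V_eq V hV]
    exact (hasDerivAt_phi hs0 hs1).comp_hasFDerivAt (h₂ := phi) y (hasFDerivAt_sq y)
  rw [h.fderiv, ContinuousLinearMap.smul_apply, ContinuousLinearMap.smul_apply,
    inner_single y i, smul_eq_mul]
  norm_num

lemma fderiv2_V (V : EuclideanSpace ℝ (Fin 2) → ℝ)
    (hV : ∀ x, V x = -2 * Real.log ((1 / Real.sqrt 2) * Real.log (1 / ‖x‖)))
    {x : E2} (h0 : 0 < ‖x‖) (h1 : ‖x‖ < 1) (i : Fin 2) :
    fderiv ℝ (fun y => fderiv ℝ V y (EuclideanSpace.single i 1)) x (EuclideanSpace.single i 1)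
      = 2 * phi' (‖x‖ ^ 2) + phi'' (‖x‖ ^ 2) * (2 * x i) ^ 2 := by
  have hs0 : 0 < ‖x‖ ^ 2 := by positivity
  have hs1 : ‖x‖ ^ 2 < 1 := by nlinarith
  -- eventual equality
  have hU : IsOpen (Metric.ball (0:E2) 1 ∩ {(0:E2)}ᶜ) :=
    Metric.isOpen_ball.inter isOpen_compl_singleton
  have hxU : x ∈ Metric.ball (0:E2) 1 ∩ {(0:E2)}ᶜ := by
    constructor
    · exact mem_ball_zero_iff.2 h1
    · exact norm_pos_iff.1 h0
  have hev : (fun y => fderiv ℝ V y (EuclideanSpace.single i 1)) =ᶠ[nhds x]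
      (fun y => phi' (‖y‖ ^ 2) * (2 * y i)) := by
    filter_upwards [hU.mem_nhds hxU] with y hy
    exact fderiv_V V hV (norm_pos_iff.2 hy.2) (mem_ball_zero_iff.1 hy.1) i
  rw [hev.fderiv_eq]
  have hF : HasFDerivAt (fun y : E2 => phi' (‖y‖ ^ 2))
      (phi'' (‖x‖ ^ 2) • (2 • (innerSL ℝ x))) x :=
    (hasDerivAt_phi' hs0 hs1).comp_hasFDerivAt (h₂ := phi') x (hasFDerivAt_sq x)
  have hL : HasFDerivAt (fun y : E2 => 2 * y i)
      ((2:ℝ) • (EuclideanSpace.proj i : E2 →L[ℝ] ℝ)) x :=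
    ((EuclideanSpace.proj (𝕜 := ℝ) i).hasFDerivAt).const_mul 2
  have hprod : HasFDerivAt (fun y : E2 => phi' (‖y‖ ^ 2) * (2 * y i)) _ x := hF.mul hL
  rw [hprod.fderiv]
  have hproj : (EuclideanSpace.proj (𝕜 := ℝ) i) (EuclideanSpace.single i 1) = 1 := by
    simp
  simp only [ContinuousLinearMap.add_apply, ContinuousLinearMap.smul_apply, hproj,
    inner_single x i, smul_eq_mul, nsmul_eq_mul]
  push_cast
  ring

/-- The Euclidean Laplacian on `ℝ²`: `Δu = ∂²u/∂x₁² + ∂²u/∂x₂²`. -/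
noncomputable def laplacian (u : EuclideanSpace ℝ (Fin 2) → ℝ)
    (x : EuclideanSpace ℝ (Fin 2)) : ℝ :=
  ∑ i : Fin 2,
    fderiv ℝ (fun y => fderiv ℝ u y (EuclideanSpace.single i 1)) x (EuclideanSpace.single i 1)

/-- The function `V(x) = −2 log((1/√2) log(1/‖x‖))` satisfies `ΔV − e^V/‖x‖² = 0`
for all `x` with `0 < ‖x‖ < 1`. -/
theorem stmt1 (V : EuclideanSpace ℝ (Fin 2) → ℝ)
    (hV : ∀ x, V x = -2 * Real.log ((1 / Real.sqrt 2) * Real.log (1 / ‖x‖))) :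
    ∀ x : EuclideanSpace ℝ (Fin 2), 0 < ‖x‖ → ‖x‖ < 1 →
      laplacian V x - Real.exp (V x) / ‖x‖ ^ 2 = 0 := by
  intro x h0 h1
  have hs0 : (0:ℝ) < ‖x‖ ^ 2 := by positivity
  have hl : Real.log ‖x‖ < 0 := Real.log_neg h0 h1
  have hnorm : x 0 ^ 2 + x 1 ^ 2 = ‖x‖ ^ 2 := by
    have := real_inner_self_eq_norm_sq x
    rw [PiLp.inner_apply] at this
    simp [Fin.sum_univ_two] at this
    nlinarith [this]
  have hlap : laplacian V x = 4 * phi' (‖x‖ ^ 2) + 4 * phi'' (‖x‖ ^ 2) * ‖x‖ ^ 2 := by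
    rw [laplacian, Fin.sum_univ_two, fderiv2_V V hV h0 h1 0, fderiv2_V V hV h0 h1 1, ← hnorm]
    ring
  have h2 : (0:ℝ) < Real.sqrt 2 := Real.sqrt_pos.2 (by norm_num)
  have ha : (0:ℝ) < (1 / Real.sqrt 2) * Real.log (1 / ‖x‖) := by
    rw [one_div ‖x‖, Real.log_inv]
    exact mul_pos (by positivity) (by linarith)
  have hexp : Real.exp (V x) = ((1 / Real.sqrt 2) * Real.log (1 / ‖x‖))⁻¹ ^ 2 := by
    rw [hV x, show (-2:ℝ) * Real.log ((1 / Real.sqrt 2) * Real.log (1 / ‖x‖))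
      = -Real.log ((1 / Real.sqrt 2) * Real.log (1 / ‖x‖))
        + -Real.log ((1 / Real.sqrt 2) * Real.log (1 / ‖x‖)) by ring,
      Real.exp_add, Real.exp_neg, Real.exp_log ha]
    ring
  have hlogs : Real.log (‖x‖ ^ 2) = 2 * Real.log ‖x‖ := by
    rw [Real.log_pow]; push_cast; ring
  have hloginv : Real.log (1 / ‖x‖) = -Real.log ‖x‖ := by rw [one_div, Real.log_inv]
  rw [hlap, hexp, phi', phi'', hlogs, hloginv]
  have hx : ‖x‖ ≠ 0 := ne_of_gt h0
  have hl' : Real.log ‖x‖ ≠ 0 := ne_of_lt hl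
  have hsq2 : Real.sqrt 2 ^ 2 = 2 := Real.sq_sqrt (by norm_num)
  field_simp
  nlinarith [hsq2, sq_nonneg (Real.log ‖x‖), sq_nonneg ‖x‖]
end

section
/- Let 0 < γ < 1 and β₁, β₂ > 0, and let f : ℝ² → ℝ be a continuous function satisfying β₁‖x‖² ≤ f(x) ≤ β₂‖x‖² for all x with 0 < ‖x‖ < γ. Define V(x) = −2·log( (1/√2)·log(1/‖x‖) ). Then h₁(x) = V(x) − log β₁ satisfies Δh₁(x) − f(x)·‖x‖⁻⁴·exp(h₁(x)) ≤ 0 (h₁ is a supersolution), and h₂(x) = V(x) − log β₂ satisfies Δh₂(x) − f(x)·‖x‖⁻⁴·exp(h₂(x)) ≥ 0 (h₂ is a subsolution), for all x with 0 < ‖x‖ < γ. -/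
noncomputable def pr (i : Fin 2) : EuclideanSpace ℝ (Fin 2) →L[ℝ] ℝ := EuclideanSpace.proj i
lemma pr_apply (i : Fin 2) (y : EuclideanSpace ℝ (Fin 2)) : pr i y = y i := rfl
noncomputable def Q (y : EuclideanSpace ℝ (Fin 2)) : ℝ := ∑ i, y i ^ 2
noncomputable def B (y : EuclideanSpace ℝ (Fin 2)) : EuclideanSpace ℝ (Fin 2) →L[ℝ] ℝ :=
  ∑ i, (2 * y i) • pr i

lemma norm_eq_sqrt_Q (y : EuclideanSpace ℝ (Fin 2)) : ‖y‖ = Real.sqrt (Q y) := by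
  rw [EuclideanSpace.norm_eq]; simp [Q, sq_abs]

lemma Q_nonneg (y : EuclideanSpace ℝ (Fin 2)) : 0 ≤ Q y := by
  apply Finset.sum_nonneg; intro i _; positivity

lemma Q_eq_norm_sq (y : EuclideanSpace ℝ (Fin 2)) : Q y = ‖y‖ ^ 2 := by
  rw [norm_eq_sqrt_Q, Real.sq_sqrt (Q_nonneg y)]

lemma hQ (y : EuclideanSpace ℝ (Fin 2)) : HasFDerivAt Q (B y) y := by
  have h : ∀ i : Fin 2, HasFDerivAt (fun z : EuclideanSpace ℝ (Fin 2) => z i ^ 2)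
      ((2 * y i) • pr i) y := by
    intro i
    have h : HasFDerivAt (fun z : EuclideanSpace ℝ (Fin 2) => z i * z i)
        (y i • pr i + y i • pr i) y :=
      ((pr i).hasFDerivAt (x := y)).fun_mul ((pr i).hasFDerivAt (x := y))
    rw [show (fun z : EuclideanSpace ℝ (Fin 2) => z i ^ 2) = fun z => z i * z i by ext z; ring,
      show (2 * y i) • pr i = y i • pr i + y i • pr i by rw [two_mul, add_smul]]
    exact h
  exact HasFDerivAt.fun_sum (fun i _ => h i)

lemma B_apply (y : EuclideanSpace ℝ (Fin 2)) (i : Fin 2) :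
    B y (EuclideanSpace.single i 1) = 2 * y i := by
  simp only [B, ContinuousLinearMap.sum_apply, ContinuousLinearMap.smul_apply, pr_apply,
    EuclideanSpace.single_apply, smul_eq_mul]
  fin_cases i <;> simp

noncomputable def aa : ℝ := -(1/(2*Real.sqrt 2))
noncomputable def G (s : ℝ) : ℝ := -2 * Real.log (aa * Real.log s)
noncomputable def g1 (s : ℝ) : ℝ := -2 / (s * Real.log s)
noncomputable def g2 (s : ℝ) : ℝ := 2 * (Real.log s + 1) / (s * Real.log s)^2

lemma aa_neg : aa < 0 := by
  have : 0 < 1/(2*Real.sqrt 2) := by positivity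
  simp only [aa]; linarith

lemma hG {s : ℝ} (hs : 0 < s) (hs1 : s < 1) : HasDerivAt G (g1 s) s := by
  have hl : Real.log s < 0 := Real.log_neg hs hs1
  have hpos : 0 < aa * Real.log s := mul_pos_of_neg_of_neg aa_neg hl
  have h1 : HasDerivAt (fun t : ℝ => aa * Real.log t) (aa * s⁻¹) s :=
    (Real.hasDerivAt_log hs.ne').const_mul aa
  have h2 := (h1.log hpos.ne').const_mul (-2 : ℝ)
  refine h2.congr_deriv ?_
  unfold g1
  have hane : aa ≠ 0 := aa_neg.ne
  have hsne : s ≠ 0 := hs.ne'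
  have hlne : Real.log s ≠ 0 := hl.ne
  field_simp

lemma hg1 {s : ℝ} (hs : 0 < s) (hs1 : s < 1) : HasDerivAt g1 (g2 s) s := by
  have hl : Real.log s < 0 := Real.log_neg hs hs1
  have hne : s * Real.log s ≠ 0 := by nlinarith
  have hd : HasDerivAt (fun s : ℝ => s * Real.log s) (Real.log s + 1) s := by
    have := (hasDerivAt_id s).mul (Real.hasDerivAt_log hs.ne')
    refine this.congr_deriv ?_
    simp [hs.ne']
  have := (hasDerivAt_const s (-2 : ℝ)).div hd hne
  refine this.congr_deriv ?_
  unfold g2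
  field_simp
  ring

/-- first derivative of `y ↦ G (Q y) - c` -/
lemma hGQ (c : ℝ) {y : EuclideanSpace ℝ (Fin 2)} (hy0 : 0 < ‖y‖) (hy1 : ‖y‖ < 1) :
    HasFDerivAt (fun z => G (Q z) - c) (g1 (Q y) • B y) y := by
  have hq0 : 0 < Q y := by rw [Q_eq_norm_sq]; positivity
  have hq1 : Q y < 1 := by rw [Q_eq_norm_sq]; nlinarith
  exact ((hG hq0 hq1).comp_hasFDerivAt y (hQ y)).sub_const c

lemma lap (c : ℝ) (x : EuclideanSpace ℝ (Fin 2)) (hx0 : 0 < ‖x‖) (hx1 : ‖x‖ < 1) :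
    laplacian (fun y => G (Q y) - c) x = 8 / (Q x * (Real.log (Q x))^2) := by
  have hq0 : 0 < Q x := by rw [Q_eq_norm_sq]; positivity
  have hq1 : Q x < 1 := by rw [Q_eq_norm_sq]; nlinarith
  set U : Set (EuclideanSpace ℝ (Fin 2)) := {y | 0 < ‖y‖ ∧ ‖y‖ < 1} with hUdef
  have hU : IsOpen U := by
    apply IsOpen.inter (s := {y | 0 < ‖y‖}) (t := {y | ‖y‖ < 1})
    · exact isOpen_lt continuous_const continuous_norm
    · exact isOpen_lt continuous_norm continuous_const
  have hxU : x ∈ U := ⟨hx0, hx1⟩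
  have hmem : U ∈ nhds x := hU.mem_nhds hxU
  have key : ∀ i : Fin 2,
      fderiv ℝ (fun y => fderiv ℝ (fun z => G (Q z) - c) y (EuclideanSpace.single i 1)) x
        (EuclideanSpace.single i 1)
      = 2 * g1 (Q x) + 4 * x i ^ 2 * g2 (Q x) := by
    intro i
    -- the inner function agrees with φ on U
    have heq : (fun y => fderiv ℝ (fun z => G (Q z) - c) y (EuclideanSpace.single i 1))
        =ᶠ[nhds x] (fun y => g1 (Q y) * (2 * y i)) := by
      filter_upwards [hmem] with y hy
      rw [(hGQ c hy.1 hy.2).fderiv]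
      simp [B_apply]
    rw [heq.fderiv_eq]
    -- derivative of φ at x
    have h1 : HasFDerivAt (fun y : EuclideanSpace ℝ (Fin 2) => g1 (Q y)) (g2 (Q x) • B x) x :=
      (hg1 hq0 hq1).comp_hasFDerivAt x (hQ x)
    have h2 : HasFDerivAt (fun y : EuclideanSpace ℝ (Fin 2) => 2 * y i) ((2:ℝ) • pr i) x := by
      exact ((pr i).hasFDerivAt (x := x)).const_mul 2
    have h3 := h1.fun_mul h2
    rw [h3.fderiv]
    simp only [ContinuousLinearMap.add_apply, ContinuousLinearMap.smul_apply, smul_eq_mul,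
      B_apply, pr_apply, EuclideanSpace.single_apply]
    simp
    ring
  unfold laplacian
  rw [Fin.sum_univ_two, key 0, key 1]
  have hsum : x 0 ^ 2 + x 1 ^ 2 = Q x := by simp [Q, Fin.sum_univ_two]
  have hl : Real.log (Q x) < 0 := Real.log_neg hq0 hq1
  have hsne : Q x ≠ 0 := hq0.ne'
  have hlne : Real.log (Q x) ≠ 0 := hl.ne
  have : 2 * g1 (Q x) + 4 * x 0 ^ 2 * g2 (Q x) + (2 * g1 (Q x) + 4 * x 1 ^ 2 * g2 (Q x))
      = 4 * g1 (Q x) + 4 * Q x * g2 (Q x) := by rw [← hsum]; ring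
  rw [this]
  unfold g1 g2
  field_simp
  ring

lemma exp_G {s : ℝ} (hs : 0 < s) (hs1 : s < 1) : Real.exp (G s) = 8 / (Real.log s)^2 := by
  have hl : Real.log s < 0 := Real.log_neg hs hs1
  have hu : 0 < aa * Real.log s := mul_pos_of_neg_of_neg aa_neg hl
  unfold G
  rw [show (-2:ℝ) * Real.log (aa*Real.log s)
      = -(Real.log (aa*Real.log s) + Real.log (aa*Real.log s)) by ring,
    Real.exp_neg, Real.exp_add, Real.exp_log hu]
  have hsq : Real.sqrt 2 ^ 2 = 2 := Real.sq_sqrt (by norm_num)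
  have h8 : aa * Real.log s * (aa * Real.log s) = (Real.log s)^2 / 8 := by
    unfold aa
    have h2 : Real.sqrt 2 ≠ 0 := by positivity
    field_simp
    nlinarith [hsq]
  rw [h8, inv_div]

lemma V_eq_G (V : EuclideanSpace ℝ (Fin 2) → ℝ)
    (hV : ∀ x, V x = -2 * Real.log ((1 / Real.sqrt 2) * Real.log (1 / ‖x‖)))
    (y : EuclideanSpace ℝ (Fin 2)) : V y = G (Q y) := by
  rw [hV y, norm_eq_sqrt_Q]
  unfold G aa
  congr 1
  rw [one_div (Real.sqrt (Q y)), Real.log_inv, Real.log_sqrt (Q_nonneg y)]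
  have h2 : Real.sqrt 2 ≠ 0 := by positivity
  field_simp

/-- If `0 < γ < 1`, `β₁, β₂ > 0` and `f` is continuous with `β₁‖x‖² ≤ f(x) ≤ β₂‖x‖²` for
`0 < ‖x‖ < γ`, then with `V(x) = −2 log((1/√2) log(1/‖x‖))`, the function `h₁ = V − log β₁`
is a supersolution and `h₂ = V − log β₂` is a subsolution of `Δh = f(x)‖x‖⁻⁴ e^h` on
`{0 < ‖x‖ < γ}`. -/
theorem stmt3 (γ β₁ β₂ : ℝ) (hγ : 0 < γ) (hγ1 : γ < 1) (hβ₁ : 0 < β₁) (hβ₂ : 0 < β₂)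
    (f : EuclideanSpace ℝ (Fin 2) → ℝ) (hf : Continuous f)
    (hbound : ∀ x : EuclideanSpace ℝ (Fin 2), 0 < ‖x‖ → ‖x‖ < γ →
      β₁ * ‖x‖ ^ 2 ≤ f x ∧ f x ≤ β₂ * ‖x‖ ^ 2)
    (V h₁ h₂ : EuclideanSpace ℝ (Fin 2) → ℝ)
    (hV : ∀ x, V x = -2 * Real.log ((1 / Real.sqrt 2) * Real.log (1 / ‖x‖)))
    (hh₁ : ∀ x, h₁ x = V x - Real.log β₁)
    (hh₂ : ∀ x, h₂ x = V x - Real.log β₂) :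
    ∀ x : EuclideanSpace ℝ (Fin 2), 0 < ‖x‖ → ‖x‖ < γ →
      laplacian h₁ x - f x * (‖x‖ ^ 4)⁻¹ * Real.exp (h₁ x) ≤ 0 ∧
      0 ≤ laplacian h₂ x - f x * (‖x‖ ^ 4)⁻¹ * Real.exp (h₂ x) := by
  intro x hx0 hxγ
  have hx1 : ‖x‖ < 1 := hxγ.trans hγ1
  have hq0 : 0 < Q x := by rw [Q_eq_norm_sq]; positivity
  have hq1 : Q x < 1 := by rw [Q_eq_norm_sq]; nlinarith
  have hL : Real.log (Q x) < 0 := Real.log_neg hq0 hq1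
  have hfun₁ : h₁ = fun y => G (Q y) - Real.log β₁ :=
    funext fun y => by rw [hh₁ y, V_eq_G V hV y]
  have hfun₂ : h₂ = fun y => G (Q y) - Real.log β₂ :=
    funext fun y => by rw [hh₂ y, V_eq_G V hV y]
  have hlap₁ : laplacian h₁ x = 8/(Q x * Real.log (Q x)^2) := by
    rw [hfun₁]; exact lap _ x hx0 hx1
  have hlap₂ : laplacian h₂ x = 8/(Q x * Real.log (Q x)^2) := by
    rw [hfun₂]; exact lap _ x hx0 hx1
  have hnorm4 : ‖x‖^4 = Q x^2 := by rw [Q_eq_norm_sq]; ring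
  have hexp₁ : Real.exp (h₁ x) = (8 / Real.log (Q x)^2) / β₁ := by
    rw [hh₁ x, V_eq_G V hV x, Real.exp_sub, Real.exp_log hβ₁, exp_G hq0 hq1]
  have hexp₂ : Real.exp (h₂ x) = (8 / Real.log (Q x)^2) / β₂ := by
    rw [hh₂ x, V_eq_G V hV x, Real.exp_sub, Real.exp_log hβ₂, exp_G hq0 hq1]
  have hfb := hbound x hx0 hxγ
  have hfl : β₁ * Q x ≤ f x := by rw [Q_eq_norm_sq]; exact hfb.1
  have hqne : Q x ≠ 0 := hq0.ne'
  have hLne : Real.log (Q x) ≠ 0 := hL.ne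
  have hL2 : (0:ℝ) < Real.log (Q x)^2 := by nlinarith
  have hfu : f x ≤ β₂ * Q x := by rw [Q_eq_norm_sq]; exact hfb.2
  constructor
  · rw [hlap₁, hnorm4, hexp₁, sub_nonpos]
    have hC : 0 < (Q x^2)⁻¹ * ((8/Real.log (Q x)^2)/β₁) :=
      mul_pos (inv_pos.2 (by positivity)) (div_pos (div_pos (by norm_num) hL2) hβ₁)
    have key : 8/(Q x * Real.log (Q x)^2)
        = (β₁ * Q x) * ((Q x^2)⁻¹ * ((8/Real.log (Q x)^2)/β₁)) := by
      field_simp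
    rw [key]
    exact (mul_le_mul_of_nonneg_right hfl hC.le).trans_eq (by ring)
  · rw [hlap₂, hnorm4, hexp₂, sub_nonneg]
    have hC : 0 < (Q x^2)⁻¹ * ((8/Real.log (Q x)^2)/β₂) :=
      mul_pos (inv_pos.2 (by positivity)) (div_pos (div_pos (by norm_num) hL2) hβ₂)
    have key : 8/(Q x * Real.log (Q x)^2)
        = (β₂ * Q x) * ((Q x^2)⁻¹ * ((8/Real.log (Q x)^2)/β₂)) := by
      field_simp
    rw [key]
    exact ((mul_le_mul_of_nonneg_right hfu hC.le).trans_eq (by ring)).trans_eq' (by ring)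
end

section
/- The function Γ(x) = −4·log‖x‖ − 2·log( (1/√2)·log(1/‖x‖) ), defined for x ∈ ℝ² with 0 < ‖x‖ < 1, satisfies ΔΓ(x) = ‖x‖²·exp(Γ(x)) for all x with 0 < ‖x‖ < 1. -/
/- ## Auxiliary scalar profile and its derivatives -/

/-- scalar profile: `Γ x = gProf (‖x‖²)` -/
noncomputable def gProf (s : ℝ) : ℝ :=
  -4 * Real.log (Real.sqrt s) - 2 * Real.log ((1 / Real.sqrt 2) * Real.log (1 / Real.sqrt s))

noncomputable def gD1 (t : ℝ) : ℝ := -2 * t⁻¹ - 2 * (t * Real.log t)⁻¹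

noncomputable def gD2 (t : ℝ) : ℝ :=
  2 * (t ^ 2)⁻¹ + 2 * ((Real.log t + 1) * ((t * Real.log t) ^ 2)⁻¹)

lemma hasDerivAt_gProf {t : ℝ} (h0 : 0 < t) (h1 : t < 1) :
    HasDerivAt gProf (gD1 t) t := by
  have hlt : Real.log t < 0 := Real.log_neg h0 h1
  have hlne : Real.log t ≠ 0 := ne_of_lt hlt
  have htne : t ≠ 0 := ne_of_gt h0
  have hs2 : Real.sqrt 2 ≠ 0 := by positivity
  set G : ℝ → ℝ := fun s => -4 * (Real.log s / 2) -
      2 * Real.log ((1 / Real.sqrt 2) * (-(Real.log s / 2))) with hG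
  have hmne : (1 / Real.sqrt 2) * (-(Real.log t / 2)) ≠ 0 := by
    apply ne_of_gt
    have h2 : (0:ℝ) < Real.sqrt 2 := by positivity
    have h3 : (0:ℝ) < -(Real.log t / 2) := by linarith
    positivity
  have hlog : HasDerivAt Real.log t⁻¹ t := Real.hasDerivAt_log htne
  have hu : HasDerivAt (fun s => (1 / Real.sqrt 2) * (-(Real.log s / 2)))
      ((1 / Real.sqrt 2) * (-(t⁻¹ / 2))) t := ((hlog.div_const 2).neg).const_mul _
  have hG' : HasDerivAt G
      (-4 * (t⁻¹ / 2) - 2 * (((1 / Real.sqrt 2) * (-(t⁻¹ / 2))) /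
        ((1 / Real.sqrt 2) * (-(Real.log t / 2))))) t :=
    ((hlog.div_const 2).const_mul (-4)).sub ((hu.log hmne).const_mul 2)
  have hev : gProf =ᶠ[nhds t] G := by
    filter_upwards [isOpen_Ioi.mem_nhds (Set.mem_Ioi.mpr h0)] with s hs
    have hs0 : (0:ℝ) < s := hs
    have heq : Real.log (1 / Real.sqrt s) = -(Real.log s / 2) := by
      rw [one_div, Real.log_inv, Real.log_sqrt hs0.le]
    simp only [gProf, hG, Real.log_sqrt hs0.le, heq]
  have hfin := hG'.congr_of_eventuallyEq hev
  refine hfin.congr_deriv ?_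
  unfold gD1
  field_simp
  ring

lemma hasDerivAt_gD1 {t : ℝ} (h0 : 0 < t) (h1 : t < 1) :
    HasDerivAt gD1 (gD2 t) t := by
  have hlne : Real.log t ≠ 0 := ne_of_lt (Real.log_neg h0 h1)
  have htne : t ≠ 0 := ne_of_gt h0
  have hlog : HasDerivAt Real.log t⁻¹ t := Real.hasDerivAt_log htne
  have hmul : HasDerivAt (fun s => s * Real.log s) (1 * Real.log t + t * t⁻¹) t :=
    (hasDerivAt_id t).mul hlog
  have h1' : HasDerivAt (fun s => -2 * s⁻¹) (-2 * (-1 / t ^ 2)) t :=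
    (((hasDerivAt_id t).inv htne).const_mul (-2))
  have h2' : HasDerivAt (fun s => -2 * (s * Real.log s)⁻¹)
      (-2 * (-(1 * Real.log t + t * t⁻¹) / (t * Real.log t) ^ 2)) t :=
    ((hmul.inv (mul_ne_zero htne hlne)).const_mul (-2))
  have hsum := h1'.add h2'
  have hfin : HasDerivAt gD1
      (-2 * (-1 / t ^ 2) + -2 * (-(1 * Real.log t + t * t⁻¹) / (t * Real.log t) ^ 2)) t := by
    have hgD1 : gD1 = fun s => -2 * s⁻¹ + -2 * (s * Real.log s)⁻¹ := by
      funext s; unfold gD1; ring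
    rw [hgD1]; exact hsum
  convert hfin using 1
  unfold gD2
  field_simp

/- ## The squared-norm function on `ℝ²` and its derivative -/

noncomputable def Pj (i : Fin 2) : EuclideanSpace ℝ (Fin 2) →L[ℝ] ℝ := EuclideanSpace.proj i

lemma Pj_apply (i : Fin 2) (y : EuclideanSpace ℝ (Fin 2)) : Pj i y = y i := rfl

def Qf (y : EuclideanSpace ℝ (Fin 2)) : ℝ := y 0 * y 0 + y 1 * y 1

noncomputable def Lf (y : EuclideanSpace ℝ (Fin 2)) : EuclideanSpace ℝ (Fin 2) →L[ℝ] ℝ :=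
  (2 * y 0) • Pj 0 + (2 * y 1) • Pj 1

lemma hasFDerivAt_Qf (y : EuclideanSpace ℝ (Fin 2)) : HasFDerivAt Qf (Lf y) y := by
  have h := ((Pj 0).hasFDerivAt.mul (Pj 0).hasFDerivAt).add
    ((Pj 1).hasFDerivAt.mul (Pj 1).hasFDerivAt) (x := y)
  refine HasFDerivAt.congr_fderiv (f := Qf) h ?_
  simp only [Pj_apply]
  unfold Lf
  module

lemma Lf_single (y : EuclideanSpace ℝ (Fin 2)) (i : Fin 2) :
    Lf y (EuclideanSpace.single i 1) = 2 * y i := by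
  fin_cases i <;>
    simp [Lf, Pj_apply, ContinuousLinearMap.add_apply, EuclideanSpace.single_apply]

lemma continuous_Qf : Continuous Qf := by
  have h := ((Pj 0).continuous.mul (Pj 0).continuous).add
    ((Pj 1).continuous.mul (Pj 1).continuous)
  exact h

lemma norm_eq_sqrt_Qf (y : EuclideanSpace ℝ (Fin 2)) : ‖y‖ = Real.sqrt (Qf y) := by
  rw [EuclideanSpace.norm_eq]
  congr 1
  rw [Fin.sum_univ_two]
  simp only [Real.norm_eq_abs, sq_abs, Qf]
  ring

/-- The function `Γ(x) = −4 log‖x‖ − 2 log((1/√2) log(1/‖x‖))` satisfies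
`ΔΓ = ‖x‖² e^Γ` for all `x` with `0 < ‖x‖ < 1`. -/
theorem stmt4 (Γ : EuclideanSpace ℝ (Fin 2) → ℝ)
    (hΓ : ∀ x, Γ x = -4 * Real.log ‖x‖ - 2 * Real.log ((1 / Real.sqrt 2) * Real.log (1 / ‖x‖))) :
    ∀ x : EuclideanSpace ℝ (Fin 2), 0 < ‖x‖ → ‖x‖ < 1 →
      laplacian Γ x = ‖x‖ ^ 2 * Real.exp (Γ x) := by
  classical
  have hΓQ : Γ = fun y => gProf (Qf y) := by
    funext y
    rw [hΓ, norm_eq_sqrt_Qf y]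
    rfl
  intro x hx0 hx1
  set t := Qf x with ht
  have hQfnn : 0 ≤ Qf x := by
    have h0 := mul_self_nonneg (x 0)
    have h1 := mul_self_nonneg (x 1)
    unfold Qf; linarith
  have htnorm : ‖x‖ ^ 2 = t := by rw [norm_eq_sqrt_Qf x, Real.sq_sqrt hQfnn]
  have ht0 : 0 < t := htnorm ▸ pow_pos hx0 2
  have ht1 : t < 1 := by rw [← htnorm]; nlinarith
  have hlt : Real.log t < 0 := Real.log_neg ht0 ht1
  have hlne : Real.log t ≠ 0 := ne_of_lt hlt
  have htne : t ≠ 0 := ne_of_gt ht0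
  -- first derivative of Γ on the annulus
  have hF : ∀ y : EuclideanSpace ℝ (Fin 2), 0 < Qf y → Qf y < 1 →
      HasFDerivAt Γ (gD1 (Qf y) • Lf y) y := by
    intro y h0 h1
    rw [hΓQ]
    exact (hasDerivAt_gProf h0 h1).comp_hasFDerivAt y (hasFDerivAt_Qf y)
  have hopen : IsOpen {y : EuclideanSpace ℝ (Fin 2) | 0 < Qf y ∧ Qf y < 1} := by
    exact isOpen_Ioo (a := (0:ℝ)) (b := 1) |>.preimage continuous_Qf
  have hmem : x ∈ {y : EuclideanSpace ℝ (Fin 2) | 0 < Qf y ∧ Qf y < 1} := ⟨ht0, ht1⟩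
  -- eventual formula for the first partials
  have hev : ∀ i : Fin 2, (fun y => fderiv ℝ Γ y (EuclideanSpace.single i 1)) =ᶠ[nhds x]
      (fun y => gD1 (Qf y) * (2 * y i)) := by
    intro i
    filter_upwards [hopen.mem_nhds hmem] with y hy
    rw [(hF y hy.1 hy.2).fderiv]
    simp [ContinuousLinearMap.smul_apply, Lf_single, smul_eq_mul]
  -- second partials
  have hsecond : ∀ i : Fin 2,
      fderiv ℝ (fun y => fderiv ℝ Γ y (EuclideanSpace.single i 1)) x (EuclideanSpace.single i 1)
        = 2 * gD1 t + gD2 t * (2 * x i) * (2 * x i) := by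
    intro i
    rw [(hev i).fderiv_eq]
    have hg1Q : HasFDerivAt (fun y => gD1 (Qf y)) (gD2 t • Lf x) x :=
      (hasDerivAt_gD1 (t := Qf x) ht0 ht1).comp_hasFDerivAt x (hasFDerivAt_Qf x)
    have hyi : HasFDerivAt (fun y : EuclideanSpace ℝ (Fin 2) => 2 * y i) ((2:ℝ) • Pj i) x := by
      have h := ((Pj i).hasFDerivAt (x := x)).const_mul (2:ℝ)
      simpa only [Pj_apply] using h
    have hprod := hg1Q.mul hyi
    rw [HasFDerivAt.fderiv (f := fun y => gD1 (Qf y) * (2 * y i)) hprod]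
    have hPsingle : Pj i (EuclideanSpace.single i 1) = 1 := by
      rw [Pj_apply, EuclideanSpace.single_apply]
      simp
    simp only [ContinuousLinearMap.add_apply, ContinuousLinearMap.smul_apply,
      Lf_single, hPsingle, smul_eq_mul]
    ring
  -- assemble the Laplacian
  have hlap : laplacian Γ x = 4 * gD1 t + 4 * gD2 t * t := by
    rw [laplacian, Fin.sum_univ_two, hsecond 0, hsecond 1, ht]
    simp only [Qf]
    ring
  -- value of `exp (Γ x)`
  have hs : ‖x‖ = Real.sqrt t := norm_eq_sqrt_Qf x
  have hlog1 : Real.log (1 / ‖x‖) = -(Real.log t / 2) := by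
    rw [hs, one_div, Real.log_inv, Real.log_sqrt ht0.le]
  have hm : (0:ℝ) < (1 / Real.sqrt 2) * Real.log (1 / ‖x‖) := by
    rw [hlog1]
    have h2 : (0:ℝ) < Real.sqrt 2 := by positivity
    have h3 : (0:ℝ) < -(Real.log t / 2) := by linarith
    positivity
  have hexp : Real.exp (Γ x) = (‖x‖ ^ 4 * ((1 / Real.sqrt 2) * Real.log (1 / ‖x‖)) ^ 2)⁻¹ := by
    rw [hΓ x]
    rw [show -4 * Real.log ‖x‖ - 2 * Real.log ((1 / Real.sqrt 2) * Real.log (1 / ‖x‖))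
        = -(((4:ℕ) * Real.log ‖x‖) + ((2:ℕ) * Real.log ((1 / Real.sqrt 2) * Real.log (1 / ‖x‖))))
        by push_cast; ring]
    rw [Real.exp_neg, Real.exp_add, Real.exp_nat_mul, Real.exp_nat_mul,
      Real.exp_log hx0, Real.exp_log hm]
  have h2sq : (Real.sqrt 2) ^ 2 = 2 := Real.sq_sqrt (by norm_num)
  have hx4 : ‖x‖ ^ 4 = t ^ 2 := by
    rw [show (4:ℕ) = 2 * 2 from rfl, pow_mul, htnorm]
  have hc : ((1 / Real.sqrt 2) * -(Real.log t / 2)) ^ 2 = (Real.log t) ^ 2 / 8 := by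
    rw [mul_pow, div_pow, one_pow, h2sq]
    ring
  rw [hlap, hexp, hlog1, htnorm, hx4, hc]
  unfold gD1 gD2
  field_simp
  ring
end

section
/- There is no twice continuously differentiable function v : [0, ∞) → ℝ satisfying v(0) = 0, v'(0) = 0, and v''(t) = exp(v(t)) for all t ≥ 0. Equivalently, the maximal solution of the initial value problem v'' = e^v, v(0) = 0, v'(0) = 0 blows up at some finite time. -/
open Set Real

/-- Monotonicity helper on a right half-line from a derivative bound on the interior. -/
lemma mono_aux {a : ℝ} {f f' : ℝ → ℝ} (hc : ContinuousOn f (Ici a))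
    (hd : ∀ t, a < t → HasDerivAt f (f' t) t) (hp : ∀ t, a < t → 0 ≤ f' t) :
    MonotoneOn f (Ici a) := by
  apply monotoneOn_of_deriv_nonneg (convex_Ici a) hc
  · intro x hx
    rw [interior_Ici] at hx
    exact ((hd x hx).differentiableAt).differentiableWithinAt
  · intro x hx
    rw [interior_Ici] at hx
    rw [(hd x hx).deriv]
    exact hp x hx

/-- There is no twice continuously differentiable function `v : [0,∞) → ℝ` with
`v(0) = 0`, `v'(0) = 0` and `v'' = e^v` on `[0,∞)`: the solution of this initial value
problem blows up in finite time. -/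
theorem stmt5 :
    ¬ ∃ v : ℝ → ℝ, ContDiffOn ℝ 2 v (Set.Ici 0) ∧ v 0 = 0 ∧ deriv v 0 = 0 ∧
      ∀ t : ℝ, 0 ≤ t → deriv (deriv v) t = Real.exp (v t) := by
  rintro ⟨v, hC, hv0, hd0, hODE⟩
  set w := deriv v with hw
  -- derivative of v at interior points
  have hAv : ∀ t : ℝ, 0 < t → HasDerivAt v (w t) t := by
    intro t ht
    have h1 : ContDiffAt ℝ 2 v t := hC.contDiffAt (Ici_mem_nhds ht)
    exact (h1.differentiableAt (by norm_num)).hasDerivAt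
  -- w is C¹ on (0,∞)
  have hCw : ContDiffOn ℝ 1 w (Ioi 0) := by
    exact (hC.mono Ioi_subset_Ici_self).deriv_of_isOpen (m := 1) isOpen_Ioi (by norm_num)
  have hAw : ∀ t : ℝ, 0 < t → HasDerivAt w (Real.exp (v t)) t := by
    intro t ht
    have hdiff : DifferentiableAt ℝ w t :=
      (hCw.differentiableOn (by norm_num)).differentiableAt (Ioi_mem_nhds ht)
    have h := hdiff.hasDerivAt
    rwa [hODE t ht.le] at h
  -- continuity of w at 0
  have hw0 : ContinuousAt w 0 := by
    by_contra h
    have hnd : ¬ DifferentiableAt ℝ w 0 := fun hd => h hd.continuousAt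
    have h1 : deriv w 0 = 0 := deriv_zero_of_not_differentiableAt hnd
    have h2 := hODE 0 le_rfl
    rw [hv0, Real.exp_zero, h1] at h2
    norm_num at h2
  have hcw : ContinuousOn w (Ici 0) := by
    intro t ht
    rcases eq_or_lt_of_le (mem_Ici.mp ht) with h | h
    · exact (h ▸ hw0).continuousWithinAt
    · exact ((hAw t h).differentiableAt.continuousAt).continuousWithinAt
  have hcv : ContinuousOn v (Ici 0) := hC.continuousOn
  -- w is nonnegative
  have hwnn : ∀ t : ℝ, 0 ≤ t → 0 ≤ w t := by
    intro t ht
    have := mono_aux hcw hAw (fun t _ => (Real.exp_pos _).le) (self_mem_Ici) ht ht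
    rwa [hd0] at this
  -- v is nonnegative
  have hvnn : ∀ t : ℝ, 0 ≤ t → 0 ≤ v t := by
    intro t ht
    have := mono_aux hcv hAv (fun t ht => hwnn t ht.le) (self_mem_Ici) ht ht
    rwa [hv0] at this
  -- w t ≥ t
  have hwt : ∀ t : ℝ, 0 ≤ t → t ≤ w t := by
    intro t ht
    have hm : MonotoneOn (fun t => w t - t) (Ici 0) := by
      apply mono_aux (hcw.sub continuousOn_id)
      · intro t ht
        exact (hAw t ht).sub (hasDerivAt_id t)
      · intro t ht
        have := Real.one_le_exp (hvnn t ht.le)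
        linarith
    have := hm (self_mem_Ici) ht ht
    simp only [hd0, sub_zero] at this
    linarith
  -- v t ≥ t²/2
  have hvt : ∀ t : ℝ, 0 ≤ t → t ^ 2 / 2 ≤ v t := by
    intro t ht
    have hm : MonotoneOn (fun t => v t - t ^ 2 / 2) (Ici 0) := by
      apply mono_aux (hcv.sub (by fun_prop))
      · intro t ht
        have h2 : HasDerivAt (fun t : ℝ => t ^ 2 / 2) t t := by
          have := (hasDerivAt_pow 2 t).div_const 2
          simpa using this
        exact (hAv t ht).sub h2
      · intro t ht
        have := hwt t ht.le
        linarith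
    have := hm (self_mem_Ici) ht ht
    simp only [hv0] at this
    norm_num at this
    linarith
  -- energy identity
  have hE : ∀ t : ℝ, 0 ≤ t → w t ^ 2 = 2 * Real.exp (v t) - 2 := by
    have hEd : ∀ t : ℝ, 0 < t →
        HasDerivAt (fun t => w t ^ 2 - 2 * Real.exp (v t)) 0 t := by
      intro t ht
      have h1 := (hAw t ht).fun_pow 2
      have h2 := ((hAv t ht).exp).const_mul 2
      have h3 := h1.fun_sub h2
      refine h3.congr_deriv ?_
      ring
    have hcE : ContinuousOn (fun t => w t ^ 2 - 2 * Real.exp (v t)) (Ici 0) := by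
      fun_prop
    have hm : MonotoneOn (fun t => w t ^ 2 - 2 * Real.exp (v t)) (Ici 0) :=
      mono_aux hcE hEd (fun _ _ => le_rfl)
    have ha : MonotoneOn (fun t => -(w t ^ 2 - 2 * Real.exp (v t))) (Ici 0) := by
      apply mono_aux hcE.neg
      · intro t ht
        exact (hEd t ht).neg
      · intro t ht
        simp
    intro t ht
    have h1 := hm (self_mem_Ici) ht ht
    have h2 := ha (self_mem_Ici) ht ht
    simp only [hd0, hv0, Real.exp_zero] at h1 h2
    norm_num at h1 h2
    linarith
  -- for t ≥ 2, v t ≥ 2 and exp(v t / 2) ≤ w t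
  have hv2 : ∀ t : ℝ, 2 ≤ t → 2 ≤ v t := by
    intro t ht
    have h0 : (0:ℝ) ≤ t := by linarith
    have := hvt t h0
    nlinarith
  have hwexp : ∀ t : ℝ, 2 ≤ t → Real.exp (v t / 2) ≤ w t := by
    intro t ht
    have h0 : (0:ℝ) ≤ t := by linarith
    have he : Real.exp (v t) ≤ w t ^ 2 := by
      rw [hE t h0]
      have h2 : (2:ℝ) ≤ Real.exp (v t) := by
        have := hv2 t ht
        calc (2:ℝ) ≤ 2 + 1 := by norm_num
          _ ≤ Real.exp 2 := Real.add_one_le_exp 2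
          _ ≤ Real.exp (v t) := Real.exp_le_exp.mpr this
      linarith
    have hsq : Real.exp (v t / 2) ^ 2 = Real.exp (v t) := by
      rw [sq, ← Real.exp_add]
      congr 1
      ring
    calc Real.exp (v t / 2) = Real.sqrt (Real.exp (v t / 2) ^ 2) :=
          (Real.sqrt_sq (Real.exp_pos _).le).symm
      _ ≤ Real.sqrt (w t ^ 2) := by
          apply Real.sqrt_le_sqrt
          rw [hsq]; exact he
      _ = w t := Real.sqrt_sq (hwnn t h0)
  -- the decreasing barrier H t = exp(-v t / 2) + t / 2
  have hH : MonotoneOn (fun t => -(Real.exp (-v t / 2) + t / 2)) (Ici 2) := by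
    apply mono_aux (f' := fun t => -(Real.exp (-v t / 2) * (-w t / 2) + 1 / 2))
    · apply ContinuousOn.neg
      apply ContinuousOn.add
      · apply Real.continuous_exp.comp_continuousOn
        apply ContinuousOn.div_const
        apply ContinuousOn.neg
        exact hcv.mono (fun x hx => show (0:ℝ) ≤ x from le_trans (by norm_num) (mem_Ici.mp hx))
      · fun_prop
    · intro t ht
      have h0 : (0:ℝ) < t := by linarith
      have h1 : HasDerivAt (fun t => Real.exp (-v t / 2))
          (Real.exp (-v t / 2) * (-w t / 2)) t := by
        have := (((hAv t h0).neg).div_const 2).exp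
        simpa using this
      have h2 : HasDerivAt (fun t : ℝ => t / 2) (1 / 2) t := by
        simpa using (hasDerivAt_id t).div_const 2
      exact ((h1.add h2).neg)
    · intro t ht
      have hkey : 1 ≤ Real.exp (-v t / 2) * w t := by
        calc (1:ℝ) = Real.exp (-v t / 2) * Real.exp (v t / 2) := by
              rw [← Real.exp_add]; ring_nf; rw [Real.exp_zero]
          _ ≤ Real.exp (-v t / 2) * w t := by
              apply mul_le_mul_of_nonneg_left (hwexp t ht.le) (Real.exp_pos _).le
      nlinarith [Real.exp_pos (-v t / 2)]
  -- contradiction: H 6 ≤ H 2 but both exponentials positive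
  have h62 := hH (self_mem_Ici) (by norm_num : (6:ℝ) ∈ Ici 2) (by norm_num)
  simp only at h62
  have hp6 : 0 < Real.exp (-v 6 / 2) := Real.exp_pos _
  have hp2 : Real.exp (-v 2 / 2) ≤ 1 := by
    apply Real.exp_le_one_iff.mpr
    have := hv2 2 le_rfl
    linarith
  linarith
end

section
/- Let c > 0, C > 0, T < 0, let g : (−∞, T] → ℝ be continuous with |g(t)| ≤ C/t⁴ for all t ≤ T, and let u : (−∞, T] → ℝ be a bounded, twice continuously differentiable function satisfying −u''(t) + (2/t²)·(c·exp(u(t)) − 1) = g(t) for all t ≤ T. Then there exists a sequence tₙ → −∞ such that u(tₙ) → −log c as n → ∞. -/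
open Filter

/-- Core lemma: a function bounded on `(-∞, b)` (with `b < 0`) cannot satisfy
`h'' t ≥ δ/t²` for a positive `δ` on all of `(-∞, b)`. -/
lemma core_lemma8 (b δ K : ℝ) (hb : b < 0) (hδ : 0 < δ) (h : ℝ → ℝ)
    (hK : ∀ t < b, |h t| ≤ K)
    (hC2 : ContDiffOn ℝ 2 h (Set.Iio b))
    (hpp : ∀ t < b, δ / t ^ 2 ≤ deriv (deriv h) t) : False := by
  have hopen : IsOpen (Set.Iio b) := isOpen_Iio
  have hK0 : 0 ≤ K := le_trans (abs_nonneg _) (hK (b - 1) (by linarith))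
  set f := deriv h with hf_def
  have hf1 : ContDiffOn ℝ 1 f (Set.Iio b) :=
    hC2.deriv_of_isOpen hopen (m := 1) (by norm_num)
  have hdh : ∀ x < b, HasDerivAt h (f x) x := fun x hx =>
    ((hC2.differentiableOn (by norm_num)).differentiableAt (hopen.mem_nhds hx)).hasDerivAt
  have hdf : ∀ x < b, HasDerivAt f (deriv f x) x := fun x hx =>
    ((hf1.differentiableOn one_ne_zero).differentiableAt (hopen.mem_nhds hx)).hasDerivAt
  have hfc : ContinuousOn f (Set.Iio b) := hf1.continuousOn
  have hhc : ContinuousOn h (Set.Iio b) := hC2.continuousOn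
  have hx2 : ∀ x : ℝ, x < b → 0 < x ^ 2 := by
    intro x hx
    have : x < 0 := lt_trans hx hb
    nlinarith
  -- f is monotone on (-∞, b)
  have monF : MonotoneOn f (Set.Iio b) := by
    apply monotoneOn_of_deriv_nonneg (convex_Iio b) hfc
    · rw [interior_Iio]; exact hf1.differentiableOn one_ne_zero
    · intro x hx
      rw [interior_Iio] at hx
      have h2 := hpp x hx
      have h3 : 0 < δ / x ^ 2 := div_pos hδ (hx2 x hx)
      linarith
  -- Step A: f ≥ 0 on (-∞, b)
  have hfnn : ∀ a, a < b → 0 ≤ f a := by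
    intro a ha
    by_contra hfa
    push_neg at hfa
    set t := a - (2 * K + 1) / (-f a) with ht_def
    have hpos : 0 < (2 * K + 1) / (-f a) := div_pos (by linarith) (by linarith)
    have hta : t < a := by rw [ht_def]; linarith
    set φ := fun x : ℝ => h x - f a * x with hφ_def
    have hsub : Set.Icc t a ⊆ Set.Iio b := fun x hx => lt_of_le_of_lt hx.2 ha
    have monφ : AntitoneOn φ (Set.Icc t a) := by
      apply antitoneOn_of_deriv_nonpos (convex_Icc t a)
      · exact (hhc.mono hsub).sub ((continuous_const.mul continuous_id).continuousOn)
      · rw [interior_Icc]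
        intro x hx
        have hxb : x < b := lt_trans hx.2 ha
        exact ((hdh x hxb).sub ((hasDerivAt_id x).const_mul (f a))).differentiableAt.differentiableWithinAt
      · rw [interior_Icc]
        intro x hx
        have hxb : x < b := lt_trans hx.2 ha
        have hd : deriv φ x = f x - f a * 1 :=
          ((hdh x hxb).sub ((hasDerivAt_id x).const_mul (f a))).deriv
        rw [hd]
        have : f x ≤ f a := monF hxb ha (le_of_lt hx.2)
        linarith
    have h1 : φ a ≤ φ t :=
      monφ ⟨le_refl t, le_of_lt hta⟩ ⟨le_of_lt hta, le_refl a⟩ (le_of_lt hta)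
    have hfa0 : f a ≠ 0 := ne_of_lt hfa
    have e1 : f a * (t - a) = 2 * K + 1 := by
      have et : t - a = (2 * K + 1) / f a := by
        rw [ht_def, div_neg]; ring
      rw [et]
      field_simp
    have e2 : f a * t - f a * a = f a * (t - a) := by ring
    have hKa := hK a ha
    have hKt := hK t (lt_trans hta ha)
    rw [abs_le] at hKa hKt
    have h1' : h a - f a * a ≤ h t - f a * t := h1
    linarith [hKa.1, hKt.2]
  -- Step B: quantitative lower bound f r ≥ -δ/(2r)
  have hstep : ∀ r, r < b → -(δ / (2 * r)) ≤ f r := by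
    intro r hr
    set ψ := fun x : ℝ => f x + δ * x⁻¹ with hψ_def
    have hdψ : ∀ x, x < b → HasDerivAt ψ (deriv f x + δ * -(x ^ 2)⁻¹) x := by
      intro x hx
      have hne : x ≠ 0 := ne_of_lt (lt_trans hx hb)
      exact (hdf x hx).add ((hasDerivAt_inv hne).const_mul δ)
    have monψ : MonotoneOn ψ (Set.Iio b) := by
      apply monotoneOn_of_deriv_nonneg (convex_Iio b)
      · intro x hx
        exact (hdψ x hx).differentiableAt.continuousAt.continuousWithinAt
      · rw [interior_Iio]
        intro x hx
        exact (hdψ x hx).differentiableAt.differentiableWithinAt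
      · rw [interior_Iio]
        intro x hx
        rw [(hdψ x hx).deriv]
        have h2 := hpp x hx
        have e : δ / x ^ 2 = δ * (x ^ 2)⁻¹ := by ring
        rw [e] at h2
        linarith
    have h2r : 2 * r < b := by linarith [lt_trans hr hb]
    have hm : ψ (2 * r) ≤ ψ r := monψ h2r hr (by linarith [lt_trans hr hb])
    have hf2r : 0 ≤ f (2 * r) := hfnn (2 * r) h2r
    have hrne : r ≠ 0 := ne_of_lt (lt_trans hr hb)
    have e : δ * (2 * r)⁻¹ - δ * r⁻¹ = -(δ / (2 * r)) := by
      field_simp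
      ring
    have hm' : f (2 * r) + δ * (2 * r)⁻¹ ≤ f r + δ * r⁻¹ := hm
    linarith
  -- Step C: h grows like (δ/2) log(-x), contradiction with boundedness
  set χ := fun x : ℝ => h x + δ / 2 * Real.log (-x) with hχ_def
  have hdχ : ∀ x, x < b → HasDerivAt χ (f x + δ / 2 * x⁻¹) x := by
    intro x hx
    have hne : x ≠ 0 := ne_of_lt (lt_trans hx hb)
    have hlog : HasDerivAt (fun y : ℝ => Real.log (-y)) x⁻¹ x := by
      have h1 : HasDerivAt (fun y : ℝ => -y) (-1) x := (hasDerivAt_id x).neg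
      have h2 : HasDerivAt Real.log (-x)⁻¹ (-x) := Real.hasDerivAt_log (neg_ne_zero.mpr hne)
      have h3 := h2.comp x h1
      exact h3.congr_deriv (by rw [inv_neg]; ring)
    exact (hdh x hx).add (hlog.const_mul (δ / 2))
  have monχ : MonotoneOn χ (Set.Iio b) := by
    apply monotoneOn_of_deriv_nonneg (convex_Iio b)
    · intro x hx
      exact (hdχ x hx).differentiableAt.continuousAt.continuousWithinAt
    · rw [interior_Iio]
      intro x hx
      exact (hdχ x hx).differentiableAt.differentiableWithinAt
    · rw [interior_Iio]
      intro x hx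
      rw [(hdχ x hx).deriv]
      have h2 := hstep x hx
      have hne : x ≠ 0 := ne_of_lt (lt_trans hx hb)
      have e : δ / 2 * x⁻¹ = δ / (2 * x) := by
        field_simp
      linarith
  set E := Real.exp (2 / δ * (2 * K + 1)) with hE_def
  have hE1 : 1 ≤ E := Real.one_le_exp (by positivity)
  have h1b : (0 : ℝ) < 1 - b := by linarith
  set t := -((1 - b) * E) with ht_def
  have hts : t ≤ b - 1 := by nlinarith
  have htb : t < b := by linarith
  have hsb : b - 1 < b := by linarith
  have hmon := monχ htb hsb hts
  have hEpos : (0 : ℝ) < E := lt_of_lt_of_le zero_lt_one hE1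
  have hlogE : Real.log E = 2 / δ * (2 * K + 1) := by
    rw [hE_def, Real.log_exp]
  have elog : Real.log (-t) = Real.log (1 - b) + 2 / δ * (2 * K + 1) := by
    have : -t = (1 - b) * E := by rw [ht_def]; ring
    rw [this, Real.log_mul (ne_of_gt h1b) (ne_of_gt hEpos), hlogE]
  have elog2 : Real.log (-(b - 1)) = Real.log (1 - b) := by norm_num
  have ecancel : δ / 2 * (2 / δ * (2 * K + 1)) = 2 * K + 1 := by
    field_simp
  have hmon' : h t + δ / 2 * Real.log (-t) ≤ h (b - 1) + δ / 2 * Real.log (-(b - 1)) := hmon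
  rw [elog, elog2, mul_add, ecancel] at hmon'
  have hKt := hK t htb
  have hKs := hK (b - 1) hsb
  rw [abs_le] at hKt hKs
  linarith [hKt.1, hKs.2]

/-- If `u` is a bounded, twice continuously differentiable solution on `(−∞, T]` of
`−u'' + (2/t²)(c e^u − 1) = g`, where `|g(t)| ≤ C/t⁴`, then there is a sequence
`tₙ → −∞` along which `u(tₙ) → −log c`. -/
theorem stmt8 (c C T : ℝ) (hc : 0 < c) (hC : 0 < C) (hT : T < 0)
    (g : ℝ → ℝ) (hg : ContinuousOn g (Set.Iic T))
    (hgb : ∀ t ≤ T, |g t| ≤ C / t ^ 4)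
    (u : ℝ → ℝ) (hub : ∃ K : ℝ, ∀ t ≤ T, |u t| ≤ K)
    (hreg : ContDiffOn ℝ 2 u (Set.Iic T))
    (hode : ∀ t ≤ T, -deriv (deriv u) t + (2 / t ^ 2) * (c * Real.exp (u t) - 1) = g t) :
    ∃ tseq : ℕ → ℝ, Tendsto tseq atTop atBot ∧
      Tendsto (fun n => u (tseq n)) atTop (nhds (-Real.log c)) := by
  obtain ⟨K, hK⟩ := hub
  set L := Real.log c with hL
  have hucont : ContinuousOn u (Set.Iic T) := hreg.continuousOn
  have hexp : ∀ t : ℝ, c * Real.exp (u t) = Real.exp (u t + L) := by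
    intro t
    rw [hL, Real.exp_add, Real.exp_log hc]
    ring
  have key : ∀ ε : ℝ, 0 < ε → ∀ t₀ ≤ T, ∃ t ≤ t₀, |u t + L| < ε := by
    intro ε hε t₀ ht₀
    by_contra hcon
    push_neg at hcon
    -- sign constancy on (-∞, t₀]
    have hsign : (∀ t ≤ t₀, ε ≤ u t + L) ∨ (∀ t ≤ t₀, u t + L ≤ -ε) := by
      have hcont2 : ∀ t ≤ t₀, ContinuousOn (fun x => u x + L) (Set.Icc t t₀) := by
        intro t ht
        exact (hucont.mono (fun x hx => le_trans hx.2 ht₀)).add continuousOn_const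
      rcases le_or_gt ε (u t₀ + L) with hpos | hneg
      · left
        intro t ht
        by_contra hlt
        push_neg at hlt
        have hneg2 : u t + L ≤ -ε := by
          rcases abs_cases (u t + L) with ⟨he, _⟩ | ⟨he, _⟩
          · linarith [hcon t ht, he]
          · linarith [hcon t ht, he]
        have := intermediate_value_Icc ht (hcont2 t ht)
        have h0 : (0 : ℝ) ∈ Set.Icc (u t + L) (u t₀ + L) := ⟨by linarith, by linarith⟩
        obtain ⟨s, hs, hvs⟩ := this h0
        have hvs' : u s + L = 0 := hvs
        have := hcon s hs.2
        rw [hvs'] at this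
        simp at this
        linarith
      · right
        have ht₀neg : u t₀ + L ≤ -ε := by
          rcases abs_cases (u t₀ + L) with ⟨he, _⟩ | ⟨he, _⟩
          · linarith [hcon t₀ le_rfl, he]
          · linarith [hcon t₀ le_rfl, he]
        intro t ht
        by_contra hlt
        push_neg at hlt
        have hpos2 : ε ≤ u t + L := by
          rcases abs_cases (u t + L) with ⟨he, _⟩ | ⟨he, _⟩
          · linarith [hcon t ht, he]
          · linarith [hcon t ht, he]
        have := intermediate_value_Icc' ht (hcont2 t ht)
        have h0 : (0 : ℝ) ∈ Set.Icc (u t₀ + L) (u t + L) := ⟨by linarith, by linarith⟩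
        obtain ⟨s, hs, hvs⟩ := this h0
        have hvs' : u s + L = 0 := hvs
        have := hcon s hs.2
        rw [hvs'] at this
        simp at this
        linarith
    rcases hsign with hA | hB
    · -- case c e^u - 1 ≥ δ₀ > 0
      set δ₀ := Real.exp ε - 1 with hδ₀
      have hδ₀pos : 0 < δ₀ := by
        have := Real.add_one_le_exp ε
        simp only [hδ₀]
        linarith
      clear_value δ₀
      set b := min t₀ (-(Real.sqrt (C / δ₀))) - 1 with hb_def
      clear_value b
      have hbt₀ : b ≤ t₀ := by
        have := min_le_left t₀ (-(Real.sqrt (C / δ₀)))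
        linarith
      have hbT : b ≤ T := le_trans hbt₀ ht₀
      have hbneg : b < 0 := lt_of_le_of_lt hbT hT
      apply core_lemma8 b δ₀ K hbneg hδ₀pos u
        (fun t ht => hK t (le_of_lt (lt_of_lt_of_le ht hbT)))
        (hreg.mono (fun x hx => le_of_lt (lt_of_lt_of_le hx hbT)))
      intro t ht
      have htT : t ≤ T := le_of_lt (lt_of_lt_of_le ht hbT)
      have ht₀' : t ≤ t₀ := le_of_lt (lt_of_lt_of_le ht hbt₀)
      have htneg : t < 0 := lt_of_le_of_lt htT hT
      have ht2 : 0 < t ^ 2 := by nlinarith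
      have ht4 : 0 < t ^ 4 := by nlinarith
      -- c e^{u t} - 1 ≥ δ₀
      have hlow : δ₀ ≤ c * Real.exp (u t) - 1 := by
        rw [hexp t, hδ₀]
        have := Real.exp_le_exp.mpr (hA t ht₀')
        linarith
      -- t² ≥ C/δ₀
      have hsqrt : t ≤ -(Real.sqrt (C / δ₀)) := by
        have := min_le_right t₀ (-(Real.sqrt (C / δ₀)))
        linarith
      have hsq : Real.sqrt (C / δ₀) ^ 2 = C / δ₀ :=
        Real.sq_sqrt (le_of_lt (div_pos hC hδ₀pos))
      have htsq : C / δ₀ ≤ t ^ 2 := by nlinarith [Real.sqrt_nonneg (C / δ₀)]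
      have hCb : C / t ^ 4 ≤ δ₀ / t ^ 2 := by
        rw [div_le_div_iff₀ ht4 ht2]
        have hCle : C ≤ δ₀ * t ^ 2 := by
          rw [div_le_iff₀ hδ₀pos] at htsq
          linarith [htsq]
        nlinarith
      -- ODE bound
      have hode' := hode t htT
      have hgt := hgb t htT
      rw [abs_le] at hgt
      have hmul : (2 / t ^ 2) * δ₀ ≤ (2 / t ^ 2) * (c * Real.exp (u t) - 1) :=
        mul_le_mul_of_nonneg_left hlow (by positivity)
      have e1 : (2 / t ^ 2) * δ₀ = 2 * δ₀ / t ^ 2 := by ring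
      have e2 : 2 * δ₀ / t ^ 2 - δ₀ / t ^ 2 = δ₀ / t ^ 2 := by ring
      linarith
    · -- case c e^u - 1 ≤ -δ₀ < 0, apply core lemma to -u
      set δ₀ := 1 - Real.exp (-ε) with hδ₀
      have hδ₀pos : 0 < δ₀ := by
        have : Real.exp (-ε) < 1 := Real.exp_lt_one_iff.mpr (by linarith)
        simp only [hδ₀]
        linarith
      clear_value δ₀
      set b := min t₀ (-(Real.sqrt (C / δ₀))) - 1 with hb_def
      clear_value b
      have hbt₀ : b ≤ t₀ := by
        have := min_le_left t₀ (-(Real.sqrt (C / δ₀)))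
        linarith
      have hbT : b ≤ T := le_trans hbt₀ ht₀
      have hbneg : b < 0 := lt_of_le_of_lt hbT hT
      apply core_lemma8 b δ₀ K hbneg hδ₀pos (fun x => -u x)
        (fun t ht => by
          rw [abs_neg]
          exact hK t (le_of_lt (lt_of_lt_of_le ht hbT)))
        ((hreg.mono (fun x hx => le_of_lt (lt_of_lt_of_le hx hbT))).neg)
      intro t ht
      have hnegd : deriv (deriv (fun x => -u x)) t = -deriv (deriv u) t := by
        have h1 : deriv (fun x => -u x) = fun x => -deriv u x := funext fun x => deriv.neg
        rw [h1, deriv.fun_neg]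
      rw [hnegd]
      have htT : t ≤ T := le_of_lt (lt_of_lt_of_le ht hbT)
      have ht₀' : t ≤ t₀ := le_of_lt (lt_of_lt_of_le ht hbt₀)
      have htneg : t < 0 := lt_of_le_of_lt htT hT
      have ht2 : 0 < t ^ 2 := by nlinarith
      have ht4 : 0 < t ^ 4 := by nlinarith
      have hlow : c * Real.exp (u t) - 1 ≤ -δ₀ := by
        rw [hexp t, hδ₀]
        have := Real.exp_le_exp.mpr (hB t ht₀')
        linarith
      have hsqrt : t ≤ -(Real.sqrt (C / δ₀)) := by
        have := min_le_right t₀ (-(Real.sqrt (C / δ₀)))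
        linarith
      have hsq : Real.sqrt (C / δ₀) ^ 2 = C / δ₀ :=
        Real.sq_sqrt (le_of_lt (div_pos hC hδ₀pos))
      have htsq : C / δ₀ ≤ t ^ 2 := by nlinarith [Real.sqrt_nonneg (C / δ₀)]
      have hCb : C / t ^ 4 ≤ δ₀ / t ^ 2 := by
        rw [div_le_div_iff₀ ht4 ht2]
        have hCle : C ≤ δ₀ * t ^ 2 := by
          rw [div_le_iff₀ hδ₀pos] at htsq
          linarith [htsq]
        nlinarith
      have hode' := hode t htT
      have hgt := hgb t htT
      rw [abs_le] at hgt
      have hmul : (2 / t ^ 2) * (c * Real.exp (u t) - 1) ≤ (2 / t ^ 2) * (-δ₀) :=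
        mul_le_mul_of_nonneg_left hlow (by positivity)
      have e1 : (2 / t ^ 2) * (-δ₀) = -(2 * δ₀ / t ^ 2) := by ring
      have e2 : 2 * δ₀ / t ^ 2 - δ₀ / t ^ 2 = δ₀ / t ^ 2 := by ring
      linarith
  -- build the sequence
  have key2 : ∀ n : ℕ, ∃ t, t ≤ min (-(n : ℝ)) T ∧ |u t + L| < 1 / ((n : ℝ) + 1) := by
    intro n
    obtain ⟨t, ht, h2⟩ := key (1 / ((n : ℝ) + 1)) (by positivity) (min (-(n : ℝ)) T)
      (min_le_right _ _)
    exact ⟨t, ht, h2⟩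
  choose tseq h1 h2 using key2
  refine ⟨tseq, ?_, ?_⟩
  · apply tendsto_atBot_mono (fun n => le_trans (h1 n) (min_le_left _ _))
    exact tendsto_neg_atTop_atBot.comp tendsto_natCast_atTop_atTop
  · have habs : Tendsto (fun n => |u (tseq n) + L|) atTop (nhds 0) :=
      squeeze_zero (fun n => abs_nonneg _) (fun n => le_of_lt (h2 n))
        tendsto_one_div_add_atTop_nhds_zero_nat
    have h3 : Tendsto (fun n => u (tseq n) + L) atTop (nhds 0) :=
      (tendsto_zero_iff_abs_tendsto_zero _).mpr habs
    have h4 := h3.sub_const L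
    simp only [add_sub_cancel_right, zero_sub] at h4
    exact h4
end

section
/- Let c > 0, C > 0, T < 0, and let g : (−∞, T] → ℝ be continuous with |g(t)| ≤ C/t⁴ for all t ≤ T. If u₁, u₂ : (−∞, T] → ℝ are bounded, twice continuously differentiable functions both satisfying −u''(t) + (2/t²)·(c·exp(u(t)) − 1) = g(t) for all t ≤ T together with u₁(T) = u₂(T) = 0, then u₁ = u₂ on (−∞, T]. -/
private lemma aux_diff {T : ℝ} {w : ℝ → ℝ} (hreg : ContDiffOn ℝ 2 w (Set.Iic T)) :
    DifferentiableOn ℝ w (Set.Iio T) ∧ DifferentiableOn ℝ (deriv w) (Set.Iio T) := by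
  have h2 : ContDiffOn ℝ 2 w (Set.Iio T) := hreg.mono Set.Iio_subset_Iic_self
  have h2' : ContDiffOn ℝ (1 + 1) w (Set.Iio T) := h2.of_le (by norm_num)
  rw [contDiffOn_succ_iff_deriv_of_isOpen isOpen_Iio] at h2'
  exact ⟨h2'.1, h2'.2.2.differentiableOn one_ne_zero⟩

private lemma convex_lemma {T a b : ℝ} {w : ℝ → ℝ} (hreg : ContDiffOn ℝ 2 w (Set.Iic T))
    (hab : a < b) (hbT : b ≤ T)
    (hpos : ∀ t, t < T → 0 < w t → 0 ≤ deriv (deriv w) t)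
    (hw : ∀ s ∈ Set.Ioo a b, 0 < w s) : ConvexOn ℝ (Set.Icc a b) w := by
  obtain ⟨hd1, hd2⟩ := aux_diff hreg
  have hsub : Set.Ioo a b ⊆ Set.Iio T := fun s hs => lt_of_lt_of_le hs.2 hbT
  refine convexOn_of_deriv2_nonneg (convex_Icc a b)
    (hreg.continuousOn.mono (fun s hs => le_trans hs.2 hbT)) ?_ ?_ ?_
  · rw [interior_Icc]; exact hd1.mono hsub
  · rw [interior_Icc]; exact hd2.mono hsub
  · rw [interior_Icc]; intro s hs
    have h2 : deriv^[2] w s = deriv (deriv w) s := rfl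
    rw [h2]
    exact hpos s (hsub hs) (hw s hs)

private lemma key {T K : ℝ} {w : ℝ → ℝ} (hb : ∀ t ≤ T, |w t| ≤ K)
    (hreg : ContDiffOn ℝ 2 w (Set.Iic T))
    (hpos : ∀ t, t < T → 0 < w t → 0 ≤ deriv (deriv w) t)
    (hT0 : w T = 0) : ∀ t ≤ T, w t ≤ 0 := by
  intro t₀ ht₀
  by_contra h
  push_neg at h
  have hcont : ContinuousOn w (Set.Iic T) := hreg.continuousOn
  have ht₀T : t₀ < T := lt_of_le_of_ne ht₀ (by rintro rfl; linarith)
  -- the first zero of w to the right of t₀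
  set Z : Set ℝ := Set.Icc t₀ T ∩ w ⁻¹' {0} with hZdef
  have hZclosed : IsClosed Z :=
    (hcont.mono (fun s hs => hs.2)).preimage_isClosed_of_isClosed isClosed_Icc isClosed_singleton
  have hZne : Z.Nonempty := ⟨T, ⟨⟨ht₀T.le, le_rfl⟩, hT0⟩⟩
  have hZbdd : BddBelow Z := ⟨t₀, fun s hs => hs.1.1⟩
  set b := sInf Z with hbdef
  have hbZ : b ∈ Z := hZclosed.csInf_mem hZne hZbdd
  have hbt₀ : t₀ ≤ b := le_csInf hZne (fun s hs => hs.1.1)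
  have hwb : w b = 0 := hbZ.2
  have hbT : b ≤ T := hbZ.1.2
  have ht₀b : t₀ < b := by
    rcases lt_or_eq_of_le hbt₀ with h' | h'
    · exact h'
    · exfalso; rw [← h'] at hwb; linarith
  have posb : ∀ s, t₀ ≤ s → s < b → 0 < w s := by
    intro s hs1 hs2
    by_contra hws
    push_neg at hws
    have hIVT := intermediate_value_Icc' hs1
      (hcont.mono (fun x hx => le_trans hx.2 (le_trans hs2.le hbT)))
    obtain ⟨z, hz, hz0⟩ := hIVT ⟨hws, h.le⟩
    have hbz : b ≤ z := csInf_le hZbdd ⟨⟨hz.1, le_trans hz.2 (le_trans hs2.le hbT)⟩, hz0⟩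
    linarith [hz.2]
  by_cases hA : (Set.Iic t₀ ∩ w ⁻¹' {0}).Nonempty
  · -- there is a zero to the left of t₀ : take the largest
    have hAclosed : IsClosed (Set.Iic t₀ ∩ w ⁻¹' {0}) :=
      (hcont.mono (fun s hs => le_trans hs ht₀)).preimage_isClosed_of_isClosed
        isClosed_Iic isClosed_singleton
    have hAbdd : BddAbove (Set.Iic t₀ ∩ w ⁻¹' {0}) := ⟨t₀, fun s hs => hs.1⟩
    set a := sSup (Set.Iic t₀ ∩ w ⁻¹' {0}) with hadef
    have haA : a ∈ Set.Iic t₀ ∩ w ⁻¹' {0} := hAclosed.csSup_mem hA hAbdd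
    have hwa : w a = 0 := haA.2
    have hat₀ : a < t₀ := by
      rcases lt_or_eq_of_le (show a ≤ t₀ from haA.1) with h' | h'
      · exact h'
      · exfalso; rw [h'] at hwa; linarith
    have posa : ∀ s, a < s → s ≤ t₀ → 0 < w s := by
      intro s hs1 hs2
      by_contra hws
      push_neg at hws
      have hIVT := intermediate_value_Icc hs2 (hcont.mono (fun x hx => le_trans hx.2 ht₀))
      obtain ⟨z, hz, hz0⟩ := hIVT ⟨hws, h.le⟩
      have : z ≤ a := le_csSup hAbdd ⟨hz.2, hz0⟩
      linarith [hz.1]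
    have hconv : ConvexOn ℝ (Set.Icc a b) w := by
      refine convex_lemma hreg (lt_trans hat₀ ht₀b) hbT hpos ?_
      intro s hs
      rcases le_or_gt s t₀ with hst | hst
      · exact posa s hs.1 hst
      · exact posb s hst.le hs.2
    have hle := hconv.le_on_segment (Set.left_mem_Icc.2 (lt_trans hat₀ ht₀b).le)
      (Set.right_mem_Icc.2 (lt_trans hat₀ ht₀b).le)
      (by rw [segment_eq_Icc (lt_trans hat₀ ht₀b).le]; exact ⟨hat₀.le, ht₀b.le⟩)
    rw [hwa, hwb] at hle
    simp at hle
    linarith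
  · -- no zero to the left of t₀ : w > 0 on (-∞, b), contradiction with boundedness
    have posl : ∀ s, s ≤ t₀ → 0 < w s := by
      intro s hs
      by_contra hws
      push_neg at hws
      have hIVT := intermediate_value_Icc hs (hcont.mono (fun x hx => le_trans hx.2 ht₀))
      obtain ⟨z, hz, hz0⟩ := hIVT ⟨hws, h.le⟩
      exact hA ⟨z, hz.2, hz0⟩
    have hK0 : w t₀ ≤ K := le_trans (le_abs_self _) (hb t₀ ht₀)
    have hwt₀ : 0 < w t₀ := h
    set t := b - (b - t₀) * (K + 1) / (w t₀) with htdef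
    have hfrac : (1:ℝ) < (K + 1) / w t₀ := (one_lt_div hwt₀).2 (by linarith)
    have hbtlen : b - t₀ < b - t := by
      rw [htdef]
      have : (b - t₀) * 1 < (b - t₀) * ((K + 1) / w t₀) := by
        apply mul_lt_mul_of_pos_left hfrac (by linarith)
      calc b - t₀ = (b - t₀) * 1 := by ring
        _ < (b - t₀) * ((K + 1) / w t₀) := this
        _ = b - (b - (b - t₀) * (K + 1) / w t₀) := by ring
    have htt₀ : t < t₀ := by linarith
    have htb : t < b := by linarith
    have hconv : ConvexOn ℝ (Set.Icc t b) w := by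
      refine convex_lemma hreg htb hbT hpos ?_
      intro s hs
      rcases le_or_gt s t₀ with hst | hst
      · exact posl s hst
      · exact posb s hst.le hs.2
    set lam := (b - t₀) / (b - t) with hlamdef
    set mu := (t₀ - t) / (b - t) with hmudef
    have hbt0 : (0:ℝ) < b - t := by linarith
    have hlam0 : 0 ≤ lam := div_nonneg (by linarith) hbt0.le
    have hmu0 : 0 ≤ mu := div_nonneg (by linarith) hbt0.le
    have hsum : lam + mu = 1 := by
      rw [hlamdef, hmudef]; field_simp; ring
    have hcomb : lam • t + mu • b = t₀ := by
      rw [hlamdef, hmudef, smul_eq_mul, smul_eq_mul]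
      field_simp
      ring
    have h2 := hconv.2 (Set.left_mem_Icc.2 htb.le) (Set.right_mem_Icc.2 htb.le)
      hlam0 hmu0 hsum
    rw [hcomb, smul_eq_mul, smul_eq_mul, hwb, mul_zero, add_zero] at h2
    -- now w t₀ ≤ lam * w t, with lam = w t₀ / (K+1) and w t ≤ K
    have hne1 : b - t₀ ≠ 0 := ne_of_gt (by linarith)
    have hne2 : w t₀ ≠ 0 := ne_of_gt hwt₀
    have hne3 : K + 1 ≠ 0 := ne_of_gt (by linarith)
    have hbteq : b - t = (b - t₀) * (K + 1) / (w t₀) := by rw [htdef]; ring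
    have hlamval : lam = w t₀ / (K + 1) := by
      rw [hlamdef, hbteq]
      field_simp
    have hwtK : w t ≤ K := le_trans (le_abs_self _) (hb t (by linarith))
    have hprod : lam * (K + 1) = w t₀ := by
      rw [hlamval]; field_simp
    nlinarith [mul_le_mul_of_nonneg_left hwtK hlam0, hprod, h, h2, hlam0]
  
private lemma hpos_of {c T : ℝ} (hc : 0 < c) (hT : T < 0) {g u₁ u₂ : ℝ → ℝ}
    (hreg₁ : ContDiffOn ℝ 2 u₁ (Set.Iic T)) (hreg₂ : ContDiffOn ℝ 2 u₂ (Set.Iic T))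
    (hode₁ : ∀ t ≤ T, -deriv (deriv u₁) t + (2 / t ^ 2) * (c * Real.exp (u₁ t) - 1) = g t)
    (hode₂ : ∀ t ≤ T, -deriv (deriv u₂) t + (2 / t ^ 2) * (c * Real.exp (u₂ t) - 1) = g t) :
    ∀ t, t < T → 0 < (fun s => u₁ s - u₂ s) t →
      0 ≤ deriv (deriv (fun s => u₁ s - u₂ s)) t := by
  intro t ht hpos
  simp only at hpos
  obtain ⟨hd11, hd21⟩ := aux_diff hreg₁
  obtain ⟨hd12, hd22⟩ := aux_diff hreg₂
  have hev : (fun s => deriv u₁ s - deriv u₂ s) =ᶠ[nhds t] deriv (fun s => u₁ s - u₂ s) := by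
    filter_upwards [Iio_mem_nhds ht] with s hs
    exact (deriv_sub (hd11.differentiableAt (isOpen_Iio.mem_nhds hs))
      (hd12.differentiableAt (isOpen_Iio.mem_nhds hs))).symm
  have hderiv_eq : deriv (deriv (fun s => u₁ s - u₂ s)) t
      = deriv (deriv u₁) t - deriv (deriv u₂) t := by
    rw [← hev.deriv_eq]
    exact deriv_sub (hd21.differentiableAt (isOpen_Iio.mem_nhds ht))
      (hd22.differentiableAt (isOpen_Iio.mem_nhds ht))
  rw [hderiv_eq]
  have h1 := hode₁ t ht.le
  have h2 := hode₂ t ht.le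
  have ht2 : (0:ℝ) < t ^ 2 := by nlinarith
  have hexp : Real.exp (u₂ t) < Real.exp (u₁ t) := Real.exp_lt_exp.2 (by linarith)
  have heq : deriv (deriv u₁) t - deriv (deriv u₂) t
      = (2 / t ^ 2) * (c * (Real.exp (u₁ t) - Real.exp (u₂ t))) := by
    have : deriv (deriv u₁) t - deriv (deriv u₂) t
        = (2 / t ^ 2) * (c * Real.exp (u₁ t) - 1) - (2 / t ^ 2) * (c * Real.exp (u₂ t) - 1) := by
      linarith
    rw [this]; ring
  rw [heq]
  exact mul_nonneg (div_nonneg (by norm_num) ht2.le)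
    (mul_nonneg hc.le (by linarith))

/-- If `u₁, u₂` are bounded, twice continuously differentiable solutions on `(−∞, T]` of
`−u'' + (2/t²)(c e^u − 1) = g`, where `|g(t)| ≤ C/t⁴`, with `u₁(T) = u₂(T) = 0`, then
`u₁ = u₂` on `(−∞, T]`. -/
theorem stmt9 (c C T : ℝ) (hc : 0 < c) (hC : 0 < C) (hT : T < 0)
    (g : ℝ → ℝ) (hg : ContinuousOn g (Set.Iic T))
    (hgb : ∀ t ≤ T, |g t| ≤ C / t ^ 4)
    (u₁ u₂ : ℝ → ℝ)
    (hub₁ : ∃ K : ℝ, ∀ t ≤ T, |u₁ t| ≤ K) (hub₂ : ∃ K : ℝ, ∀ t ≤ T, |u₂ t| ≤ K)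
    (hreg₁ : ContDiffOn ℝ 2 u₁ (Set.Iic T)) (hreg₂ : ContDiffOn ℝ 2 u₂ (Set.Iic T))
    (hode₁ : ∀ t ≤ T, -deriv (deriv u₁) t + (2 / t ^ 2) * (c * Real.exp (u₁ t) - 1) = g t)
    (hode₂ : ∀ t ≤ T, -deriv (deriv u₂) t + (2 / t ^ 2) * (c * Real.exp (u₂ t) - 1) = g t)
    (hT₁ : u₁ T = 0) (hT₂ : u₂ T = 0) :
    Set.EqOn u₁ u₂ (Set.Iic T) := by
  obtain ⟨K₁, hK₁⟩ := hub₁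
  obtain ⟨K₂, hK₂⟩ := hub₂
  have hb12 : ∀ t ≤ T, |u₁ t - u₂ t| ≤ K₁ + K₂ := by
    intro t ht
    calc |u₁ t - u₂ t| ≤ |u₁ t| + |u₂ t| := abs_sub _ _
      _ ≤ K₁ + K₂ := add_le_add (hK₁ t ht) (hK₂ t ht)
  have hb21 : ∀ t ≤ T, |u₂ t - u₁ t| ≤ K₁ + K₂ := by
    intro t ht; rw [abs_sub_comm]; exact hb12 t ht
  have h1 : ∀ t ≤ T, u₁ t - u₂ t ≤ 0 :=
    key hb12 (hreg₁.sub hreg₂) (hpos_of hc hT hreg₁ hreg₂ hode₁ hode₂)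
      (by simp [hT₁, hT₂])
  have h2 : ∀ t ≤ T, u₂ t - u₁ t ≤ 0 :=
    key hb21 (hreg₂.sub hreg₁) (hpos_of hc hT hreg₂ hreg₁ hode₂ hode₁)
      (by simp [hT₁, hT₂])
  intro t ht
  have := h1 t ht
  have := h2 t ht
  simp only [Set.mem_Iic] at ht
  linarith
end

section
/- There exist constants c₀ > 0 and δ₀ ∈ (0, 1) such that for every δ ∈ (0, δ₀) there exists a twice continuously differentiable function V : [log(1/δ), log(1/δ) + c₀/δ] → ℝ satisfying V(log(1/δ)) = 0, V'(log(1/δ)) = 0, and V''(t) = δ²·exp(V(t)) for all t in that interval. -/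
/-- There are constants `c₀ > 0` and `δ₀ ∈ (0,1)` such that for every `δ ∈ (0, δ₀)` the
initial value problem `V'' = δ² e^V`, `V(log(1/δ)) = 0`, `V'(log(1/δ)) = 0` has a twice
continuously differentiable solution on the interval `[log(1/δ), log(1/δ) + c₀/δ]`. -/
theorem stmt15 :
    ∃ c₀ : ℝ, 0 < c₀ ∧ ∃ δ₀ ∈ Set.Ioo (0 : ℝ) 1, ∀ δ ∈ Set.Ioo (0 : ℝ) δ₀,
      ∃ V : ℝ → ℝ,
        ContDiffOn ℝ 2 V (Set.Icc (Real.log (1 / δ)) (Real.log (1 / δ) + c₀ / δ)) ∧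
        V (Real.log (1 / δ)) = 0 ∧ deriv V (Real.log (1 / δ)) = 0 ∧
        ∀ t ∈ Set.Icc (Real.log (1 / δ)) (Real.log (1 / δ) + c₀ / δ),
          deriv (deriv V) t = δ ^ 2 * Real.exp (V t) := by
  refine ⟨1, one_pos, 1/2, ⟨by norm_num, by norm_num⟩, ?_⟩
  rintro δ ⟨hδ0, hδ1⟩
  set t₀ : ℝ := Real.log (1 / δ) with ht₀
  set a : ℝ := δ / Real.sqrt 2 with ha
  have ha0 : 0 < a := div_pos hδ0 (Real.sqrt_pos.2 two_pos)
  set V : ℝ → ℝ := fun t => -2 * Real.log (Real.cos (a * (t - t₀))) with hV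
  set W : ℝ → ℝ := fun t => 2 * a * Real.tan (a * (t - t₀)) with hW
  set U : Set ℝ := (fun t => Real.cos (a * (t - t₀))) ⁻¹' Set.Ioi 0 with hU
  have hUopen : IsOpen U := by
    apply IsOpen.preimage (by fun_prop) isOpen_Ioi
  have hIccU : Set.Icc t₀ (t₀ + 1 / δ) ⊆ U := by
    intro t ht
    have h1 : 0 ≤ a * (t - t₀) := mul_nonneg ha0.le (by linarith [ht.1])
    have h2 : a * (t - t₀) ≤ 1 / Real.sqrt 2 := by
      have : t - t₀ ≤ 1 / δ := by linarith [ht.2]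
      calc a * (t - t₀) ≤ a * (1 / δ) := by
            exact mul_le_mul_of_nonneg_left this ha0.le
        _ = 1 / Real.sqrt 2 := by field_simp [ha]; rw [ha]; field_simp
    have hs2 : (1 : ℝ) < Real.sqrt 2 := by
      have := Real.sqrt_lt_sqrt (by norm_num) (by norm_num : (1:ℝ) < 2)
      simpa using this
    have : a * (t - t₀) < Real.pi / 2 := by
      have h3 : (1 : ℝ) / Real.sqrt 2 < 1 := by
        rw [div_lt_one (by positivity)]; exact hs2
      have := Real.pi_gt_three
      linarith
    exact Real.cos_pos_of_mem_Ioo ⟨by linarith [Real.pi_pos], this⟩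
  -- pointwise facts on U
  have hlin : ∀ t : ℝ, HasDerivAt (fun s => a * (s - t₀)) a t := by
    intro t
    simpa using ((hasDerivAt_id t).sub_const t₀).const_mul a
  have hV1 : ∀ t ∈ U, HasDerivAt V (W t) t := by
    intro t ht
    have hc : 0 < Real.cos (a * (t - t₀)) := ht
    have h2 : HasDerivAt (fun s => Real.cos (a * (s - t₀)))
        (-Real.sin (a * (t - t₀)) * a) t :=
      (Real.hasDerivAt_cos _).comp t (hlin t)
    have h3 := ((Real.hasDerivAt_log hc.ne').comp t h2).const_mul (-2 : ℝ)
    refine h3.congr_deriv (Eq.symm ?_)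
    rw [hW]
    simp only [Real.tan_eq_sin_div_cos]
    field_simp
  have hV1' : ∀ t ∈ U, deriv V t = W t := fun t ht => (hV1 t ht).deriv
  have hW1 : ∀ t ∈ U, HasDerivAt W (δ ^ 2 * Real.exp (V t)) t := by
    intro t ht
    have hc : 0 < Real.cos (a * (t - t₀)) := ht
    have h2 : HasDerivAt (fun s => Real.tan (a * (s - t₀)))
        (1 / Real.cos (a * (t - t₀)) ^ 2 * a) t :=
      by have := (Real.hasDerivAt_tan hc.ne').comp t (hlin t); exact this
    have h3 := h2.const_mul (2 * a)
    refine h3.congr_deriv (Eq.symm ?_)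
    have hexp : Real.exp (V t) = 1 / Real.cos (a * (t - t₀)) ^ 2 := by
      show Real.exp (-2 * Real.log (Real.cos (a * (t - t₀)))) = _
      have : (-2 : ℝ) * Real.log (Real.cos (a * (t - t₀)))
          = -Real.log (Real.cos (a * (t - t₀))) + -Real.log (Real.cos (a * (t - t₀))) := by ring
      rw [this, Real.exp_add, Real.exp_neg, Real.exp_log hc]
      field_simp
    rw [hexp]
    have ha2 : a ^ 2 = δ ^ 2 / 2 := by
      rw [ha, div_pow, Real.sq_sqrt (by norm_num : (0:ℝ) ≤ 2)]
    field_simp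
    nlinarith [ha2]
  refine ⟨V, ?_, ?_, ?_, ?_⟩
  · -- ContDiffOn
    apply ContDiffOn.mono ?_ hIccU
    intro t ht
    have hc : 0 < Real.cos (a * (t - t₀)) := ht
    have h1 : ContDiffAt ℝ 2 (fun s => Real.cos (a * (s - t₀))) t :=
      (Real.contDiff_cos.comp (contDiff_const.mul (contDiff_id.sub contDiff_const))).contDiffAt
    exact (contDiffAt_const.mul ((Real.contDiffAt_log.2 hc.ne').comp t h1)).contDiffWithinAt
  · simp [hV]
  · have ht₀U : t₀ ∈ U := hIccU ⟨le_refl _, by have := one_div_pos.2 hδ0; linarith⟩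
    rw [hV1' t₀ ht₀U, hW]; simp
  · intro t ht
    have htU : t ∈ U := hIccU ht
    have heq : deriv V =ᶠ[nhds t] W :=
      Filter.eventuallyEq_of_mem (hUopen.mem_nhds htU) hV1'
    rw [heq.deriv_eq]
    exact (hW1 t htU).deriv
end
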